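/- For every v ∈ (0,1), the vector of electrical angles (Φ_1, Φ_2, Φ_3, Φ_4) = (−π, −π·(1−v), −π·(1−2v), π·v) is an ambiguous vector for the linear array r = (0,1,3,4): the 4×4 steering matrix A with entries A_{m,l} = exp(𝕚·r_m·Φ_l), r = (0,1,3,4), has determinant 0. -/

import Mathlib

open Real Complex

private lemma gen_exp (v : ℝ) (a b : ℕ) (x y : ℂ)
    (hx : x = (b : ℂ) * ((π : ℂ) * (v : ℂ) * Complex.I) - (a : ℂ) * ((π : ℂ) * Complex.I))
    (hy : (Complex.exp ((π : ℂ) * (v : ℂ) * Complex.I)) ^ b * (-1 : ℂ) ^ a = y) :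
    Complex.exp x = y := by
  rw [hx, Complex.exp_sub, Complex.exp_nat_mul, Complex.exp_nat_mul, Complex.exp_pi_mul_I,
    div_eq_mul_inv, ← inv_pow, inv_neg, inv_one, hy]

set_option maxHeartbeats 2000000 in
/-- For every `v ∈ (0,1)` the vector of electrical angles
`(-π, -π(1-v), -π(1-2v), πv)` is an ambiguous vector for the linear array
`r = (0,1,3,4)`: the steering matrix has determinant `0`. -/
theorem ambiguity_0134_class_two (v : ℝ) (hv0 : 0 < v) (hv1 : v < 1) :
    Matrix.det (Matrix.of fun m l : Fin 4 =>
      Complex.exp (Complex.I * ((![0, 1, 3, 4] m : ℝ) : ℂ) *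
        (((![-π, -π * (1 - v), -π * (1 - 2 * v), π * v] : Fin 4 → ℝ) l : ℝ) : ℂ))) = 0 := by
  set E : ℂ := Complex.exp ((π : ℂ) * (v : ℂ) * Complex.I) with hE
  have hM : (Matrix.of fun m l : Fin 4 =>
      Complex.exp (Complex.I * ((![0, 1, 3, 4] m : ℝ) : ℂ) *
        (((![-π, -π * (1 - v), -π * (1 - 2 * v), π * v] : Fin 4 → ℝ) l : ℝ) : ℂ))) =
      Matrix.of ![![(1:ℂ), 1, 1, 1], ![-1, -E, -E^2, E], ![-1, -E^3, -E^6, E^3],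
        ![1, E^4, E^8, E^4]] := by
    ext m l
    fin_cases m <;> fin_cases l <;>
      simp only [Matrix.of_apply, Matrix.cons_val_zero, Matrix.cons_val_one, Matrix.head_cons,
        Matrix.cons_val_two, Matrix.tail_cons, Matrix.cons_val_three, Matrix.cons_val',
        Matrix.empty_val', Matrix.cons_val_fin_one, Matrix.head_fin_const, Fin.mk_zero,
        Fin.mk_one, show ((⟨2, by norm_num⟩ : Fin 4)) = (2 : Fin 4) from rfl,
        show ((⟨3, by norm_num⟩ : Fin 4)) = (3 : Fin 4) from rfl] <;>
      first
      | (apply gen_exp v 0 0 <;> first | (push_cast; ring1) | (norm_num; done) | (rw [hE]; ring1))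
      | (apply gen_exp v 1 0 <;> first | (push_cast; ring1) | (norm_num; done) | (rw [hE]; ring1))
      | (apply gen_exp v 1 1 <;> first | (push_cast; ring1) | (norm_num; done) | (rw [hE]; ring1))
      | (apply gen_exp v 1 2 <;> first | (push_cast; ring1) | (norm_num; done) | (rw [hE]; ring1))
      | (apply gen_exp v 0 1 <;> first | (push_cast; ring1) | (norm_num; done) | (rw [hE]; ring1))
      | (apply gen_exp v 3 0 <;> first | (push_cast; ring1) | (norm_num; done) | (rw [hE]; ring1))
      | (apply gen_exp v 3 3 <;> first | (push_cast; ring1) | (norm_num; done) | (rw [hE]; ring1))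
      | (apply gen_exp v 3 6 <;> first | (push_cast; ring1) | (norm_num; done) | (rw [hE]; ring1))
      | (apply gen_exp v 0 3 <;> first | (push_cast; ring1) | (norm_num; done) | (rw [hE]; ring1))
      | (apply gen_exp v 4 0 <;> first | (push_cast; ring1) | (norm_num; done) | (rw [hE]; ring1))
      | (apply gen_exp v 4 4 <;> first | (push_cast; ring1) | (norm_num; done) | (rw [hE]; ring1))
      | (apply gen_exp v 4 8 <;> first | (push_cast; ring1) | (norm_num; done) | (rw [hE]; ring1))
      | (apply gen_exp v 0 4 <;> first | (push_cast; ring1) | (norm_num; done) | (rw [hE]; ring1))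
  rw [hM]
  simp only [Matrix.det_succ_row_zero, Fin.sum_univ_succ, Matrix.of_apply, Matrix.submatrix_apply,
    Matrix.det_fin_one, Matrix.cons_val', Matrix.cons_val_zero, Matrix.cons_val_one,
    Matrix.head_cons, Matrix.head_fin_const, Fin.succ_zero_eq_one, Matrix.cons_val_fin_one,
    Fin.succAbove, Matrix.cons_val_succ, Finset.sum_empty, Fin.sum_univ_zero,
    show ((0:Fin 3).castSucc = (0:Fin 4)) from rfl, show ((1:Fin 3).castSucc = (1:Fin 4)) from rfl,
    show (Fin.castSucc (2:Fin 3)) = (2:Fin 4) from rfl,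
    show ((0:Fin 2).castSucc = (0:Fin 3)) from rfl,
    show ((1:Fin 2).castSucc = (1:Fin 3)) from rfl,
    show ((0:Fin 1).castSucc = (0:Fin 2)) from rfl,
    Matrix.cons_val_two, Matrix.tail_cons, Matrix.cons_val_three]
  norm_num [Fin.lt_def]
  simp only [show ∀ a b c d : ℂ, ![a,b,c,d] (Fin.castSucc 2) = c from fun _ _ _ _ => rfl,
    show ∀ a b c d : ℂ, ![a,b,c,d] 2 = c from fun _ _ _ _ => rfl,
    show ∀ a b c : ℂ, ![a,b,c] 2 = c from fun _ _ _ => rfl]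
  ring
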